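/- Let n > 1, l > -1 with 2l+3-n > 0. If ρ is nonnegative, spherically symmetric on ℝ³ with ∫ρ = M and ‖ρ‖_{n,l} := (∫ ρ^{1+1/n}|x|^{-2l/n})^{n/(n+1)} < ∞, and m(r) = ∫_{|y|≤r}ρ, then ∫_0^R m(r)²/r² dr ≤ C M^{1-1/n} ‖ρ‖_{n,l}^{1+1/n} R^{(2l+3-n)/n} for a constant C = C(n,l). -/

import Mathlib

open Real MeasureTheory Set Metric
open scoped ENNReal NNReal

noncomputable section

/-- `ℝ³` as a Euclidean space. -/
abbrev E3 := EuclideanSpace ℝ (Fin 3)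

/-- The mass function `m_ρ(r) = ∫_{|y| ≤ r} ρ(y) dy`. -/
def mfun (ρ : E3 → ℝ) (r : ℝ) : ℝ := ∫ y in Metric.closedBall (0 : E3) r, ρ y

lemma ball_rpow_bound (l : ℝ) (hl : -1 < l) :
    ∃ c₃ : ℝ, 0 < c₃ ∧ ∀ r : ℝ, 0 < r →
      ∫⁻ x in closedBall (0:E3) r, ENNReal.ofReal (‖x‖ ^ (2*l))
        ≤ ENNReal.ofReal (c₃ * r ^ (2*l+3)) := by
  set v : ℝ := (volume (ball (0:E3) 1)).toReal with hv_def
  have hVfin : volume (ball (0:E3) 1) ≠ ⊤ := measure_ball_lt_top.ne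
  have hv : 0 < v := ENNReal.toReal_pos (measure_ball_pos _ _ one_pos).ne' hVfin
  have hV : volume (ball (0:E3) 1) = ENNReal.ofReal v := (ENNReal.ofReal_toReal hVfin).symm
  have hcb : ∀ s : ℝ, 0 ≤ s →
      volume (closedBall (0:E3) s) = ENNReal.ofReal (s ^ (3:ℕ)) * ENNReal.ofReal v := by
    intro s hs
    rw [Measure.addHaar_closedBall _ _ hs, hV, finrank_euclideanSpace_fin]
  rcases le_or_gt 0 l with hl0 | hl0
  · refine ⟨v, hv, fun r hr => ?_⟩
    calc ∫⁻ x in closedBall (0:E3) r, ENNReal.ofReal (‖x‖ ^ (2*l))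
        ≤ ∫⁻ _x in closedBall (0:E3) r, ENNReal.ofReal (r ^ (2*l)) := by
          refine setLIntegral_mono' measurableSet_closedBall fun x hx => ?_
          exact ENNReal.ofReal_le_ofReal
            (rpow_le_rpow (norm_nonneg x) (mem_closedBall_zero_iff.mp hx) (by linarith))
      _ = ENNReal.ofReal (r ^ (2*l)) * volume (closedBall (0:E3) r) := setLIntegral_const _ _
      _ = ENNReal.ofReal (v * r ^ (2*l+3)) := by
          rw [hcb r hr.le, ← ENNReal.ofReal_mul (by positivity), ← ENNReal.ofReal_mul (by positivity)]
          congr 1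
          have key : r ^ (2*l) * r ^ ((3:ℕ):ℝ) = r ^ (2*l+3) := by
            rw [← Real.rpow_add hr]; push_cast; ring_nf
          rw [← Real.rpow_natCast r 3]
          linear_combination v * key
  · -- l < 0
    have h2l : 2*l < 0 := by linarith
    have h2l3 : 0 < 2*l + 3 := by linarith
    set b : ℝ := 3/(2*l) with hb_def
    have hb : b < -1 := by
      rw [hb_def, div_lt_iff_of_neg h2l]; linarith
    set d : ℝ := 1/(-(b+1)) with hd_def
    have hd : 0 < d := div_pos one_pos (by linarith)
    refine ⟨v * (1 + d), by positivity, fun r hr => ?_⟩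
    set T : ℝ := r ^ (2*l) with hT_def
    have hT : 0 < T := rpow_pos_of_pos hr _
    set μ : Measure E3 := volume.restrict (closedBall (0:E3) r) with hμ_def
    have hmeas : Measurable (fun a : E3 => ‖a‖ ^ (2*l)) := by fun_prop
    have step1 : ∫⁻ x in closedBall (0:E3) r, ENNReal.ofReal (‖x‖ ^ (2*l))
        = ∫⁻ t in Ioi (0:ℝ), μ {a : E3 | t ≤ ‖a‖ ^ (2*l)} :=
      lintegral_eq_lintegral_meas_le μ
        (ae_of_all _ fun x => rpow_nonneg (norm_nonneg x) _) hmeas.aemeasurable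
    have hb1 : ∀ t : ℝ, μ {a : E3 | t ≤ ‖a‖ ^ (2*l)} ≤ ENNReal.ofReal (r ^ (3:ℕ)) * ENNReal.ofReal v := by
      intro t
      calc μ {a : E3 | t ≤ ‖a‖ ^ (2*l)} ≤ μ univ := measure_mono (subset_univ _)
        _ = volume (closedBall (0:E3) r) := by rw [hμ_def, Measure.restrict_apply_univ]
        _ = _ := hcb r hr.le
    have hb2 : ∀ t : ℝ, T < t → μ {a : E3 | t ≤ ‖a‖ ^ (2*l)} ≤ ENNReal.ofReal (t ^ b) * ENNReal.ofReal v := by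
      intro t ht
      have ht0 : 0 < t := hT.trans ht
      have hs0 : 0 < t ^ (2*l)⁻¹ := rpow_pos_of_pos ht0 _
      have hsub : {a : E3 | t ≤ ‖a‖ ^ (2*l)} ⊆ closedBall (0:E3) (t ^ (2*l)⁻¹) := by
        intro a ha
        simp only [mem_setOf_eq] at ha
        have ha0 : a ≠ 0 := by
          rintro rfl
          rw [norm_zero, Real.zero_rpow h2l.ne] at ha
          linarith
        have hna : 0 < ‖a‖ := norm_pos_iff.mpr ha0
        rw [mem_closedBall_zero_iff]
        exact (Real.le_rpow_inv_iff_of_neg hna ht0 h2l).mpr ha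
      calc μ {a : E3 | t ≤ ‖a‖ ^ (2*l)}
          ≤ volume {a : E3 | t ≤ ‖a‖ ^ (2*l)} := Measure.restrict_le_self _
        _ ≤ volume (closedBall (0:E3) (t ^ (2*l)⁻¹)) := measure_mono hsub
        _ = ENNReal.ofReal ((t ^ (2*l)⁻¹) ^ (3:ℕ)) * ENNReal.ofReal v := hcb _ hs0.le
        _ = ENNReal.ofReal (t ^ b) * ENNReal.ofReal v := by
            congr 2
            rw [← Real.rpow_natCast (t ^ (2*l)⁻¹) 3, ← Real.rpow_mul ht0.le]
            congr 1
            rw [hb_def]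
            field_simp
            norm_num
    calc ∫⁻ x in closedBall (0:E3) r, ENNReal.ofReal (‖x‖ ^ (2*l))
        = ∫⁻ t in Ioi (0:ℝ), μ {a : E3 | t ≤ ‖a‖ ^ (2*l)} := step1
      _ ≤ ∫⁻ t in Ioc (0:ℝ) T ∪ Ioi T, μ {a : E3 | t ≤ ‖a‖ ^ (2*l)} :=
          lintegral_mono_set Ioi_subset_Ioc_union_Ioi
      _ ≤ (∫⁻ t in Ioc (0:ℝ) T, μ {a : E3 | t ≤ ‖a‖ ^ (2*l)})
          + ∫⁻ t in Ioi T, μ {a : E3 | t ≤ ‖a‖ ^ (2*l)} := lintegral_union_le _ _ _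
      _ ≤ (∫⁻ _t in Ioc (0:ℝ) T, ENNReal.ofReal (r ^ (3:ℕ)) * ENNReal.ofReal v)
          + ∫⁻ t in Ioi T, ENNReal.ofReal (t ^ b) * ENNReal.ofReal v := by
          gcongr ?_ + ?_
          · exact setLIntegral_mono' measurableSet_Ioc fun t _ => hb1 t
          · exact setLIntegral_mono' measurableSet_Ioi fun t ht => hb2 t ht
      _ = ENNReal.ofReal (r ^ (3:ℕ)) * ENNReal.ofReal v * ENNReal.ofReal T
          + ENNReal.ofReal (∫ t in Ioi T, t ^ b) * ENNReal.ofReal v := by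
          congr 1
          · rw [setLIntegral_const, Real.volume_Ioc, sub_zero]
          · rw [lintegral_mul_const' _ _ ENNReal.ofReal_ne_top,
              ofReal_integral_eq_lintegral_ofReal (integrableOn_Ioi_rpow_of_lt hb hT)]
            filter_upwards [ae_restrict_mem measurableSet_Ioi] with t ht
            exact rpow_nonneg (hT.trans ht).le _
      _ = ENNReal.ofReal (v * (1 + d) * r ^ (2*l+3)) := by
          have h2lne : 2*l ≠ 0 := h2l.ne
          have hb1ne : b + 1 ≠ 0 := by linarith
          have hdiv : ∀ x : ℝ, -x/(b+1) = x * d := by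
            intro x
            rw [hd_def, mul_one_div, div_neg, neg_div]
          have hTb : T ^ (b+1) = r ^ (2*l+3) := by
            rw [hT_def, ← Real.rpow_mul hr.le]
            congr 1
            rw [hb_def]
            field_simp [hl0.ne]
            ring
          have h3 : (r:ℝ) ^ (3:ℕ) * T = r ^ (2*l+3) := by
            rw [hT_def, ← Real.rpow_natCast r 3, ← Real.rpow_add hr]
            congr 1; push_cast; ring
          have hI : (∫ t in Ioi T, t ^ b) = r ^ (2*l+3) * d := by
            rw [integral_Ioi_rpow_of_lt hb hT, hdiv, hTb]
          rw [hI]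
          rw [← ENNReal.ofReal_mul (by positivity : (0:ℝ) ≤ r ^ (3:ℕ)),
            ← ENNReal.ofReal_mul (by positivity : (0:ℝ) ≤ r ^ (3:ℕ) * v),
            ← ENNReal.ofReal_mul (mul_nonneg (Real.rpow_nonneg hr.le _) hd.le),
            ← ENNReal.ofReal_add (mul_nonneg (by positivity) hT.le)
              (mul_nonneg (mul_nonneg (Real.rpow_nonneg hr.le _) hd.le) hv.le)]
          congr 1
          linear_combination v * h3

lemma mass_pointwise (n l : ℝ) (hn : 1 < n) {c₃ : ℝ} (hc₃ : 0 < c₃)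
    (hball : ∀ r : ℝ, 0 < r →
      ∫⁻ x in closedBall (0:E3) r, ENNReal.ofReal (‖x‖ ^ (2*l))
        ≤ ENNReal.ofReal (c₃ * r ^ (2*l+3)))
    (ρ : E3 → ℝ) (hmeas : Measurable ρ) (hpos : ∀ x, 0 ≤ ρ x) (hint : Integrable ρ)
    (hIint : Integrable (fun x => ρ x ^ (1 + 1/n) * ‖x‖ ^ (-(2*l/n)))) (r : ℝ) (hr : 0 < r) :
    mfun ρ r ≤ (∫ x, ρ x ^ (1 + 1/n) * ‖x‖ ^ (-(2*l/n))) ^ (n/(n+1))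
      * c₃ ^ (1/(n+1)) * r ^ ((2*l+3)/(n+1)) := by
  have hn0 : 0 < n := by linarith
  have hn1 : n ≠ 0 := hn0.ne'
  have hq0 : (0:ℝ) < n + 1 := by linarith
  have hq1 : n + 1 ≠ 0 := hq0.ne'
  set A : ℝ := ∫ x, ρ x ^ (1 + 1/n) * ‖x‖ ^ (-(2*l/n)) with hA_def
  have hInn : ∀ x : E3, 0 ≤ ρ x ^ (1 + 1/n) * ‖x‖ ^ (-(2*l/n)) := fun x =>
    mul_nonneg (rpow_nonneg (hpos x) _) (rpow_nonneg (norm_nonneg x) _)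
  have hA : 0 ≤ A := integral_nonneg hInn
  have hpq : (1 + 1/n).HolderConjugate (n+1) := by
    constructor
    · rw [inv_one, show (1:ℝ) + 1/n = (n+1)/n by field_simp, inv_div, inv_eq_one_div, ← add_div,
        div_self hq1]
    · positivity
    · positivity
  set F : E3 → ℝ≥0∞ := fun x => ENNReal.ofReal (ρ x * ‖x‖ ^ (-(2*l/(n+1)))) with hF_def
  set G : E3 → ℝ≥0∞ := fun x => ENNReal.ofReal (‖x‖ ^ (2*l/(n+1))) with hG_def
  have hFmeas : Measurable F := by fun_prop
  have hGmeas : Measurable G := by fun_prop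
  set ν : Measure E3 := volume.restrict (closedBall (0:E3) r) with hν_def
  have h0 : ∀ᵐ x ∂ν, x ≠ (0:E3) := by
    refine ae_iff.mpr ?_
    have hset : {x : E3 | ¬ x ≠ 0} = {(0:E3)} := by ext x; simp
    rw [hset]
    exact le_antisymm ((Measure.restrict_le_self _).trans_eq (measure_singleton _)) (zero_le')
  have stepa : ENNReal.ofReal (mfun ρ r) = ∫⁻ x, ENNReal.ofReal (ρ x) ∂ν :=
    ofReal_integral_eq_lintegral_ofReal hint.restrict (ae_of_all _ hpos)
  have stepb : ∫⁻ x, ENNReal.ofReal (ρ x) ∂ν = ∫⁻ x, (F * G) x ∂ν := by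
    refine lintegral_congr_ae ?_
    filter_upwards [h0] with x hx
    have hnx : 0 < ‖x‖ := norm_pos_iff.mpr hx
    simp only [Pi.mul_apply, hF_def, hG_def]
    rw [← ENNReal.ofReal_mul (mul_nonneg (hpos x) (rpow_nonneg (norm_nonneg x) _))]
    congr 1
    rw [mul_assoc, ← Real.rpow_add hnx, neg_add_cancel, Real.rpow_zero, mul_one]
  have stepc : ∫⁻ x, (F * G) x ∂ν
      ≤ (∫⁻ x, F x ^ (1 + 1/n) ∂ν) ^ (1/(1 + 1/n)) * (∫⁻ x, G x ^ (n+1) ∂ν) ^ (1/(n+1)) :=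
    ENNReal.lintegral_mul_le_Lp_mul_Lq ν hpq hFmeas.aemeasurable hGmeas.aemeasurable
  have hFp : ∀ x : E3, F x ^ (1 + 1/n)
      = ENNReal.ofReal (ρ x ^ (1 + 1/n) * ‖x‖ ^ (-(2*l/n))) := by
    intro x
    rw [hF_def]
    rw [ENNReal.ofReal_rpow_of_nonneg
      (mul_nonneg (hpos x) (rpow_nonneg (norm_nonneg x) _)) (by positivity : (0:ℝ) ≤ 1 + 1/n)]
    congr 1
    have hexp : (-(2*l/(n+1))) * (1 + 1/n) = -(2*l/n) := by field_simp
    rw [Real.mul_rpow (hpos x) (rpow_nonneg (norm_nonneg x) _), ← Real.rpow_mul (norm_nonneg x),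
      hexp]
  have stepd : (∫⁻ x, F x ^ (1 + 1/n) ∂ν) ^ (1/(1 + 1/n))
      ≤ ENNReal.ofReal (A ^ (n/(n+1))) := by
    have h1 : ∫⁻ x, F x ^ (1 + 1/n) ∂ν ≤ ENNReal.ofReal A := by
      calc ∫⁻ x, F x ^ (1 + 1/n) ∂ν
          = ∫⁻ x, ENNReal.ofReal (ρ x ^ (1 + 1/n) * ‖x‖ ^ (-(2*l/n))) ∂ν := by
            exact lintegral_congr fun x => by rw [hFp]
        _ ≤ ∫⁻ x, ENNReal.ofReal (ρ x ^ (1 + 1/n) * ‖x‖ ^ (-(2*l/n))) := by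
            rw [hν_def]; exact setLIntegral_le_lintegral _ _
        _ = ENNReal.ofReal A :=
            (ofReal_integral_eq_lintegral_ofReal hIint (ae_of_all _ hInn)).symm
    calc (∫⁻ x, F x ^ (1 + 1/n) ∂ν) ^ (1/(1 + 1/n))
        ≤ ENNReal.ofReal A ^ (1/(1 + 1/n)) := ENNReal.rpow_le_rpow h1 (by positivity)
      _ = ENNReal.ofReal (A ^ (n/(n+1))) := by
          have hexp : 1/(1 + 1/n) = n/(n+1) := by field_simp
          rw [ENNReal.ofReal_rpow_of_nonneg hA (by positivity), hexp]
  have hGq : ∀ x : E3, G x ^ (n+1) = ENNReal.ofReal (‖x‖ ^ (2*l)) := by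
    intro x
    rw [hG_def]
    rw [ENNReal.ofReal_rpow_of_nonneg (rpow_nonneg (norm_nonneg x) _) (by positivity)]
    congr 1
    have hexp : 2*l/(n+1) * (n+1) = 2*l := by field_simp
    rw [← Real.rpow_mul (norm_nonneg x), hexp]
  have stepe : (∫⁻ x, G x ^ (n+1) ∂ν) ^ (1/(n+1))
      ≤ ENNReal.ofReal (c₃ ^ (1/(n+1)) * r ^ ((2*l+3)/(n+1))) := by
    have h1 : ∫⁻ x, G x ^ (n+1) ∂ν ≤ ENNReal.ofReal (c₃ * r ^ (2*l+3)) := by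
      calc ∫⁻ x, G x ^ (n+1) ∂ν
          = ∫⁻ x in closedBall (0:E3) r, ENNReal.ofReal (‖x‖ ^ (2*l)) := by
            exact lintegral_congr fun x => by rw [hGq]
        _ ≤ ENNReal.ofReal (c₃ * r ^ (2*l+3)) := hball r hr
    calc (∫⁻ x, G x ^ (n+1) ∂ν) ^ (1/(n+1))
        ≤ (ENNReal.ofReal (c₃ * r ^ (2*l+3))) ^ (1/(n+1)) :=
          ENNReal.rpow_le_rpow h1 (by positivity)
      _ = ENNReal.ofReal (c₃ ^ (1/(n+1)) * r ^ ((2*l+3)/(n+1))) := by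
          rw [ENNReal.ofReal_rpow_of_nonneg (by positivity) (by positivity)]
          congr 1
          have hexp : (2*l+3) * (1/(n+1)) = (2*l+3)/(n+1) := by ring
          rw [Real.mul_rpow hc₃.le (rpow_nonneg hr.le _), ← Real.rpow_mul hr.le, hexp]
  have key : ENNReal.ofReal (mfun ρ r)
      ≤ ENNReal.ofReal (A ^ (n/(n+1)) * (c₃ ^ (1/(n+1)) * r ^ ((2*l+3)/(n+1)))) := by
    rw [stepa, stepb]
    calc ∫⁻ x, (F * G) x ∂ν
        ≤ (∫⁻ x, F x ^ (1 + 1/n) ∂ν) ^ (1/(1 + 1/n)) * (∫⁻ x, G x ^ (n+1) ∂ν) ^ (1/(n+1)) := stepc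
      _ ≤ ENNReal.ofReal (A ^ (n/(n+1))) * ENNReal.ofReal (c₃ ^ (1/(n+1)) * r ^ ((2*l+3)/(n+1))) :=
          mul_le_mul' stepd stepe
      _ = _ := (ENNReal.ofReal_mul (rpow_nonneg hA _)).symm
  have := (ENNReal.ofReal_le_ofReal_iff (by
    exact mul_nonneg (rpow_nonneg hA _)
      (mul_nonneg (rpow_nonneg hc₃.le _) (rpow_nonneg hr.le _)))).mp key
  linarith [this]

theorem camm_mass_quotient_integral_interpolation (n l : ℝ) (hn : 1 < n) (hl : -1 < l)
    (hnl : 0 < 2*l + 3 - n) :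
    ∃ C : ℝ, 0 < C ∧ ∀ (ρ : E3 → ℝ) (M : ℝ), Measurable ρ → (∀ x, 0 ≤ ρ x) →
      (∀ x y : E3, ‖x‖ = ‖y‖ → ρ x = ρ y) →
      Integrable ρ → (∫ x, ρ x) = M →
      Integrable (fun x => ρ x ^ (1 + 1/n) * ‖x‖ ^ (-(2*l/n))) →
      ∀ R : ℝ, 0 < R →
        ∫⁻ r in Set.Ioc (0:ℝ) R, ENNReal.ofReal (mfun ρ r ^ 2 / r ^ 2)
          ≤ ENNReal.ofReal
              (C * M ^ (1 - 1/n)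
                * ((∫ x, ρ x ^ (1 + 1/n) * ‖x‖ ^ (-(2*l/n))) ^ (n/(n+1))) ^ (1 + 1/n)
                * R ^ ((2*l + 3 - n)/n)) := by
  have hn0 : 0 < n := by linarith
  have hn1 : n ≠ 0 := hn0.ne'
  have hq1 : n + 1 ≠ 0 := by positivity
  obtain ⟨c₃, hc₃, hball⟩ := ball_rpow_bound l hl
  refine ⟨c₃ ^ (1/n) * (n/(2*l+3-n)), by positivity, ?_⟩
  intro ρ M hmeas hpos _hsym hint hM hIint R hR
  set A : ℝ := ∫ x, ρ x ^ (1 + 1/n) * ‖x‖ ^ (-(2*l/n)) with hA_def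
  have hInn : ∀ x : E3, 0 ≤ ρ x ^ (1 + 1/n) * ‖x‖ ^ (-(2*l/n)) := fun x =>
    mul_nonneg (rpow_nonneg (hpos x) _) (rpow_nonneg (norm_nonneg x) _)
  have hA : 0 ≤ A := integral_nonneg hInn
  have hM0 : 0 ≤ M := hM ▸ integral_nonneg hpos
  have hmle := mass_pointwise n l hn hc₃ hball ρ hmeas hpos hint hIint
  have hmM : ∀ r : ℝ, mfun ρ r ≤ M :=
    fun r => hM ▸ setIntegral_le_integral hint (ae_of_all _ hpos)
  have hm0 : ∀ r : ℝ, 0 ≤ mfun ρ r :=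
    fun r => setIntegral_nonneg measurableSet_closedBall fun x _ => hpos x
  set β : ℝ := (2*l+3-2*n)/n with hβ_def
  have hβ : -1 < β := by
    rw [hβ_def, lt_div_iff₀ hn0]
    linarith
  have hβ1 : β + 1 = (2*l+3-n)/n := by
    rw [hβ_def]
    field_simp
    ring
  set K : ℝ := M ^ ((1:ℝ) - 1/n) * (A * c₃ ^ (1/n)) with hK_def
  have hK : 0 ≤ K := mul_nonneg (rpow_nonneg hM0 _)
    (mul_nonneg hA (rpow_nonneg hc₃.le _))
  have hexp0 : (0:ℝ) ≤ 1 - 1/n := by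
    have : 1/n < 1 := by rw [div_lt_one hn0]; linarith
    linarith
  have pointwise : ∀ r ∈ Ioc (0:ℝ) R, mfun ρ r ^ 2 / r ^ 2 ≤ K * r ^ β := by
    intro r hri
    obtain ⟨hr, hrR⟩ := hri
    have hsum : ((1:ℝ) - 1/n) + (1 + 1/n) = 2 := by ring
    have h1 : mfun ρ r ^ 2 = mfun ρ r ^ ((1:ℝ) - 1/n) * mfun ρ r ^ ((1:ℝ) + 1/n) := by
      calc mfun ρ r ^ 2 = mfun ρ r ^ ((2:ℕ):ℝ) := (Real.rpow_natCast _ 2).symm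
        _ = mfun ρ r ^ (((1:ℝ) - 1/n) + (1 + 1/n)) := by rw [hsum]; norm_num
        _ = _ := Real.rpow_add' (hm0 r) (by rw [hsum]; norm_num)
    have h2 : mfun ρ r ^ ((1:ℝ) - 1/n) ≤ M ^ ((1:ℝ) - 1/n) :=
      Real.rpow_le_rpow (hm0 r) (hmM r) hexp0
    have h3 : mfun ρ r ^ ((1:ℝ) + 1/n) ≤ A * c₃ ^ (1/n) * r ^ ((2*l+3)/n) := by
      have hexp1 : n/(n+1) * (1 + 1/n) = 1 := by field_simp
      have hexp2 : 1/(n+1) * (1 + 1/n) = 1/n := by field_simp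
      have hexp3 : (2*l+3)/(n+1) * (1 + 1/n) = (2*l+3)/n := by field_simp
      calc mfun ρ r ^ ((1:ℝ) + 1/n)
          ≤ (A ^ (n/(n+1)) * c₃ ^ (1/(n+1)) * r ^ ((2*l+3)/(n+1))) ^ ((1:ℝ) + 1/n) :=
            Real.rpow_le_rpow (hm0 r) (hmle r hr) (by positivity)
        _ = A * c₃ ^ (1/n) * r ^ ((2*l+3)/n) := by
            rw [Real.mul_rpow (mul_nonneg (rpow_nonneg hA _) (rpow_nonneg hc₃.le _))
                (rpow_nonneg hr.le _),
              Real.mul_rpow (rpow_nonneg hA _) (rpow_nonneg hc₃.le _),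
              ← Real.rpow_mul hA, ← Real.rpow_mul hc₃.le, ← Real.rpow_mul hr.le,
              hexp1, hexp2, hexp3, Real.rpow_one]
    have h4 : mfun ρ r ^ 2 ≤ K * r ^ ((2*l+3)/n) := by
      rw [h1, hK_def]
      calc mfun ρ r ^ ((1:ℝ) - 1/n) * mfun ρ r ^ ((1:ℝ) + 1/n)
          ≤ M ^ ((1:ℝ) - 1/n) * (A * c₃ ^ (1/n) * r ^ ((2*l+3)/n)) :=
            mul_le_mul h2 h3 (rpow_nonneg (hm0 r) _) (rpow_nonneg hM0 _)
        _ = M ^ ((1:ℝ) - 1/n) * (A * c₃ ^ (1/n)) * r ^ ((2*l+3)/n) := by ring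
    have hrdiv : r ^ ((2*l+3)/n) / r ^ 2 = r ^ β := by
      rw [← Real.rpow_natCast r 2, ← Real.rpow_sub hr, hβ_def]
      congr 1
      push_cast
      field_simp
    calc mfun ρ r ^ 2 / r ^ 2 ≤ (K * r ^ ((2*l+3)/n)) / r ^ 2 := by
          gcongr
      _ = K * r ^ β := by rw [mul_div_assoc, hrdiv]
  have hKint : IntegrableOn (fun r : ℝ => K * r ^ β) (Ioc (0:ℝ) R) :=
    ((intervalIntegrable_iff_integrableOn_Ioc_of_le hR.le).mp
      (intervalIntegral.intervalIntegrable_rpow' hβ)).const_mul K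
  have hKnn : 0 ≤ᵐ[volume.restrict (Ioc (0:ℝ) R)] fun r : ℝ => K * r ^ β := by
    filter_upwards [ae_restrict_mem measurableSet_Ioc] with t ht
    exact mul_nonneg hK (rpow_nonneg ht.1.le _)
  calc ∫⁻ r in Ioc (0:ℝ) R, ENNReal.ofReal (mfun ρ r ^ 2 / r ^ 2)
      ≤ ∫⁻ r in Ioc (0:ℝ) R, ENNReal.ofReal (K * r ^ β) :=
        setLIntegral_mono' measurableSet_Ioc fun r hr =>
          ENNReal.ofReal_le_ofReal (pointwise r hr)
    _ = ENNReal.ofReal (∫ r in Ioc (0:ℝ) R, K * r ^ β) :=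
        (ofReal_integral_eq_lintegral_ofReal hKint hKnn).symm
    _ = ENNReal.ofReal (c₃ ^ (1/n) * (n/(2*l+3-n)) * M ^ (1 - 1/n)
          * ((A ^ (n/(n+1))) ^ (1 + 1/n)) * R ^ ((2*l + 3 - n)/n)) := by
        congr 1
        have hAe : (A ^ (n/(n+1))) ^ ((1:ℝ) + 1/n) = A := by
          have hexp1 : n/(n+1) * (1 + 1/n) = 1 := by field_simp
          rw [← Real.rpow_mul hA, hexp1, Real.rpow_one]
        have hint0 : ∫ r in Ioc (0:ℝ) R, K * r ^ β = K * (R ^ (β+1) / (β+1)) := by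
          rw [MeasureTheory.integral_const_mul, ← intervalIntegral.integral_of_le hR.le,
            integral_rpow (Or.inl hβ), Real.zero_rpow (by rw [hβ1]; positivity : β + 1 ≠ 0),
            sub_zero]
        rw [hint0, hAe, hK_def, hβ1]
        have h23n : 2*l+3-n ≠ 0 := hnl.ne'
        field_simp
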